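/- There is no 4-universal set of cardinality 5 in ℤ[i]: for every set C ⊆ ℤ[i] with |C| = 5, there exists a polynomial f with coefficients in the fraction field of ℤ[i] of degree at most 4 such that f(C) ⊆ ℤ[i] but f is not integer-valued. -/

import Mathlib

open Polynomial

/-- The fraction field of the Gaussian integers. -/
abbrev FF : Type := FractionRing GaussianInt

/-- The canonical embedding of `ℤ[i]` into its fraction field. -/
noncomputable def ι : GaussianInt →+* FF := algebraMap GaussianInt FF

/-- A polynomial with coefficients in the fraction field of `ℤ[i]` is integer-valued
if it takes values in (the image of) `ℤ[i]` at every Gaussian integer. -/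
def IntegerValued (f : FF[X]) : Prop :=
  ∀ z : GaussianInt, f.eval (ι z) ∈ Set.range ι

/-- A set `M ⊆ ℤ[i]` is `n`-universal if every polynomial of degree at most `n`
with coefficients in the fraction field of `ℤ[i]` taking integer values on `M`
is integer-valued. -/
def IsNUniversal (n : ℕ) (M : Set GaussianInt) : Prop :=
  ∀ f : FF[X], f.natDegree ≤ n → (∀ c ∈ M, f.eval (ι c) ∈ Set.range ι) → IntegerValued f

namespace NF5

def pp : GaussianInt := ⟨1, 1⟩

lemma pp_sq : pp ^ 2 = 2 * ⟨0,1⟩ := by decide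

lemma norm_pp : pp.norm = 2 := by decide

lemma pp_not_unit : ¬ IsUnit pp := by
  rw [← Zsqrtd.norm_eq_one_iff, norm_pp]; decide

lemma pp_ne_zero : pp ≠ 0 := by decide

lemma norm_dvd {x y : GaussianInt} (h : x ∣ y) : x.norm ∣ y.norm := by
  obtain ⟨c, rfl⟩ := h; rw [Zsqrtd.norm_mul]; exact Dvd.intro _ rfl

lemma pp_prime : Prime pp := by
  rw [← UniqueFactorizationMonoid.irreducible_iff_prime]
  constructor
  · exact pp_not_unit
  · intro a b hab
    have h2 : a.norm * b.norm = 2 := by rw [← Zsqrtd.norm_mul, ← hab, norm_pp]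
    have ha : a.norm.natAbs * b.norm.natAbs = 2 := by
      rw [← Int.natAbs_mul, h2]; rfl
    have hd : a.norm.natAbs ∣ 2 := ⟨_, ha.symm⟩
    rcases (Nat.prime_two.eq_one_or_self_of_dvd _ hd) with h | h
    · exact Or.inl (Zsqrtd.norm_eq_one_iff.mp h)
    · refine Or.inr (Zsqrtd.norm_eq_one_iff.mp ?_)
      rw [h] at ha; omega

lemma unit_enum {u : GaussianInt} (hu : IsUnit u) :
    u = ⟨1,0⟩ ∨ u = ⟨-1,0⟩ ∨ u = ⟨0,1⟩ ∨ u = ⟨0,-1⟩ := by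
  have h1 : u.norm.natAbs = 1 := Zsqrtd.norm_eq_one_iff.mpr hu
  have h2 : u.re * u.re + u.im * u.im = 1 := by
    have : u.norm = u.re * u.re + u.im * u.im := by
      simp [Zsqrtd.norm_def]
    rw [this] at h1
    have h3 : 0 ≤ u.re * u.re := mul_self_nonneg _
    have h4 : 0 ≤ u.im * u.im := mul_self_nonneg _
    omega
  have h5 : u.re * u.re ≤ 1 := by nlinarith [mul_self_nonneg u.im]
  have h6 : u.im * u.im ≤ 1 := by nlinarith [mul_self_nonneg u.re]
  have h7 : -1 ≤ u.re ∧ u.re ≤ 1 := by constructor <;> nlinarith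
  have h8 : -1 ≤ u.im ∧ u.im ≤ 1 := by constructor <;> nlinarith
  have hre := h7.1; have hre2 := h7.2; have him := h8.1; have him2 := h8.2
  rcases u with ⟨x, y⟩
  simp only [Zsqrtd.ext_iff] at *
  interval_cases x <;> interval_cases y <;> simp_all <;> omega

/-- difference of two units is never a unit -/
lemma unit_sub_not_unit {u v : GaussianInt} (hu : IsUnit u) (hv : IsUnit v) :
    ¬ IsUnit (u - v) := by
  intro h
  rcases unit_enum hu with rfl|rfl|rfl|rfl <;>
    rcases unit_enum hv with rfl|rfl|rfl|rfl <;>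
    rcases unit_enum h with h'|h'|h'|h' <;> revert h' <;> decide

/-- if x, w, x - 2w are units then x = w -/
lemma unit_sub_two {x w : GaussianInt} (hx : IsUnit x) (hw : IsUnit w)
    (h : IsUnit (x - 2 * w)) : x = w := by
  rcases unit_enum hx with rfl|rfl|rfl|rfl <;>
    rcases unit_enum hw with rfl|rfl|rfl|rfl <;>
    first
      | rfl
      | (rcases unit_enum h with h'|h'|h'|h' <;> revert h' <;> decide)

/-- parity: pp ∣ x ↔ x.re + x.im is even -/
lemma pp_dvd_iff (x : GaussianInt) : pp ∣ x ↔ Even (x.re + x.im) := by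
  constructor
  · rintro ⟨c, rfl⟩
    have h1 : (pp * c).re = c.re - c.im := by simp [pp, Zsqrtd.re_mul]; ring
    have h2 : (pp * c).im = c.re + c.im := by simp [pp, Zsqrtd.im_mul]; omega
    rw [h1, h2]
    exact ⟨c.re, by omega⟩
  · intro ⟨k, hk⟩
    refine ⟨⟨k, x.im - k⟩, ?_⟩
    ext <;> simp [pp, Zsqrtd.re_mul, Zsqrtd.im_mul] <;> omega

lemma pp_dvd_sub_of_not {x y z : GaussianInt} (hx : ¬ pp ∣ (z - x)) (hy : ¬ pp ∣ (z - y)) :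
    pp ∣ (x - y) := by
  rw [pp_dvd_iff] at *
  simp only [Zsqrtd.re_sub, Zsqrtd.im_sub] at *
  rcases Int.even_or_odd (z.re + z.im) with h | h <;>
    rcases Int.even_or_odd (x.re + x.im) with h2 | h2 <;>
      rcases Int.even_or_odd (y.re + y.im) with h3 | h3 <;>
        first
          | (exfalso; apply hx; obtain ⟨m, hm⟩ := h; obtain ⟨m2, hm2⟩ := h2; exact ⟨m - m2, by omega⟩)
          | (exfalso; apply hy; obtain ⟨m, hm⟩ := h; obtain ⟨m2, hm2⟩ := h3; exact ⟨m - m2, by omega⟩)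
          | (obtain ⟨m, hm⟩ := h2; obtain ⟨m2, hm2⟩ := h3; exact ⟨m - m2, by omega⟩)

lemma pp_dvd_two : pp ∣ (2 : GaussianInt) := ⟨⟨1,-1⟩, by decide⟩

/-- a Gaussian prime of even norm is a unit multiple of pp -/
lemma even_norm_prime {r : GaussianInt} (hr : Prime r) (he : ¬ Odd r.norm) :
    ∃ u : GaussianInt, IsUnit u ∧ r = u * pp := by
  have h2 : (2 : ℤ) ∣ r.norm := by
    rcases Int.even_or_odd r.norm with h | h
    · obtain ⟨c, hc⟩ := h; exact ⟨c, by omega⟩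
    · exact absurd h he
  have h3 : (2 : GaussianInt) ∣ ((r.norm : ℤ) : GaussianInt) := by
    obtain ⟨c, hc⟩ := h2
    exact ⟨(c : GaussianInt), by rw [hc]; push_cast; ring⟩
  have h4 : pp ∣ r * star r := by
    rw [← Zsqrtd.norm_eq_mul_conj]
    exact dvd_trans pp_dvd_two h3
  have h5 : pp ∣ r := by
    rcases pp_prime.2.2 _ _ h4 with h | h
    · exact h
    · -- pp ∣ star r; then star pp ∣ r, and star pp = -i * pp
      obtain ⟨c, hc⟩ := h
      have hr' : r = star pp * star c := by
        calc r = star (star r) := (star_star r).symm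
          _ = star (pp * c) := by rw [hc]
          _ = star pp * star c := by rw [star_mul']
      have hs : star pp = ⟨0,-1⟩ * pp := by decide
      exact ⟨⟨0,-1⟩ * star c, by rw [hr', hs]; ring⟩
  obtain ⟨c, hc⟩ := h5
  rcases hr.irreducible.isUnit_or_isUnit hc with h | h
  · exact absurd h pp_not_unit
  · exact ⟨c, h, by rw [hc]; ring⟩

/-- every nonzero Gaussian integer either has an odd-norm prime factor,
or is a unit times a power of pp -/
lemma formOrOdd (x : GaussianInt) (hx : x ≠ 0) :
    (∃ r, Prime r ∧ Odd r.norm ∧ r ∣ x) ∨ (∃ u k, IsUnit u ∧ x = u * pp ^ k) := by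
  generalize hn : x.norm.natAbs = n
  induction n using Nat.strong_induction_on generalizing x with
  | _ n ih =>
    by_cases hu : IsUnit x
    · exact Or.inr ⟨x, 0, hu, by ring⟩
    obtain ⟨r, hri, c, hc⟩ := WfDvdMonoid.exists_irreducible_factor hu hx
    have hrp : Prime r := hri.prime
    by_cases ho : Odd r.norm
    · exact Or.inl ⟨r, hrp, ho, ⟨c, hc⟩⟩
    · obtain ⟨u, hu', hru⟩ := even_norm_prime hrp ho
      have hc0 : c ≠ 0 := by rintro rfl; rw [mul_zero] at hc; exact hx hc
      have hcnorm : c.norm.natAbs < n := by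
        have h1 : x.norm = r.norm * c.norm := by rw [hc, Zsqrtd.norm_mul]
        have h2 : r.norm.natAbs ≠ 1 := fun h => hrp.not_unit (Zsqrtd.norm_eq_one_iff.mp h)
        have h3 : r.norm.natAbs ≠ 0 := by
          intro h
          have : r = 0 := by
            rwa [← Zsqrtd.norm_eq_zero_iff (by norm_num : (-1:ℤ) < 0) r, ← Int.natAbs_eq_zero]
          exact hrp.ne_zero this
        have h4 : c.norm.natAbs ≠ 0 := by
          intro h
          have : c = 0 := by
            rwa [← Zsqrtd.norm_eq_zero_iff (by norm_num : (-1:ℤ) < 0) c, ← Int.natAbs_eq_zero]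
          exact hc0 this
        have h5 : x.norm.natAbs = r.norm.natAbs * c.norm.natAbs := by
          rw [h1, Int.natAbs_mul]
        have h6 : 2 ≤ r.norm.natAbs := by omega
        have h7 : 2 * c.norm.natAbs ≤ r.norm.natAbs * c.norm.natAbs :=
          Nat.mul_le_mul_right _ h6
        have h8 : 2 * c.norm.natAbs ≤ n := by rw [← hn, h5]; exact h7
        omega
      rcases ih _ hcnorm c hc0 rfl with ⟨r', h1, h2, h3⟩ | ⟨u', k, h1, h2⟩
      · exact Or.inl ⟨r', h1, h2, dvd_trans h3 ⟨r, by rw [hc]; ring⟩⟩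
      · exact Or.inr ⟨u * u', k + 1, hu'.mul h1, by rw [hc, hru, h2]; ring⟩

lemma Etotal {x y z : GaussianInt} (hx : ¬ pp ∣ (z - x)) (hy : ¬ pp ∣ (z - y)) :
    pp ∣ (x - y) := pp_dvd_sub_of_not hx hy

lemma ιinj : Function.Injective ι := IsFractionRing.injective GaussianInt FF

def GOOD (C : Finset GaussianInt) : Prop :=
  ∃ r ∈ C, ∃ δ z : GaussianInt, δ ≠ 0 ∧
    (δ ∣ ∏ c ∈ C.erase r, (r - c)) ∧ ¬ (δ ∣ ∏ c ∈ C.erase r, (z - c))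

lemma mem_range_iff {a δ : GaussianInt} (hδ : δ ≠ 0) :
    (ι δ)⁻¹ * ι a ∈ Set.range ι ↔ δ ∣ a := by
  have hδ' : ι δ ≠ 0 := fun h => hδ (ιinj (h.trans (map_zero ι).symm))
  constructor
  · rintro ⟨b, hb⟩
    refine ⟨b, ιinj ?_⟩
    rw [map_mul]
    calc ι a = ι δ * ((ι δ)⁻¹ * ι a) := by rw [← mul_assoc, mul_inv_cancel₀ hδ', one_mul]
      _ = ι δ * ι b := by rw [hb]
  · rintro ⟨b, rfl⟩
    exact ⟨b, by rw [map_mul, ← mul_assoc, inv_mul_cancel₀ hδ', one_mul]⟩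

lemma good_imp (C : Finset GaussianInt) (hcard : C.card = 5) (h : GOOD C) :
    ∃ f : FF[X], f.natDegree ≤ 4 ∧ (∀ c ∈ C, f.eval (ι c) ∈ Set.range ι) ∧
      ¬ IntegerValued f := by
  obtain ⟨r, hr, δ, z, hδ, hdvd, hndvd⟩ := h
  refine ⟨Polynomial.C (ι δ)⁻¹ * ∏ c ∈ C.erase r, (X - Polynomial.C (ι c)), ?_, ?_, ?_⟩
  · calc (Polynomial.C (ι δ)⁻¹ * ∏ c ∈ C.erase r, (X - Polynomial.C (ι c))).natDegree
        ≤ (∏ c ∈ C.erase r, (X - Polynomial.C (ι c))).natDegree := natDegree_C_mul_le _ _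
      _ ≤ ∑ c ∈ C.erase r, (X - Polynomial.C (ι c)).natDegree := natDegree_prod_le _ _
      _ ≤ ∑ c ∈ C.erase r, 1 :=
          Finset.sum_le_sum (f := fun c => ((X : FF[X]) - Polynomial.C (ι c)).natDegree)
            (g := fun _ => 1) (fun c _ => natDegree_X_sub_C_le _)
      _ = 4 := by rw [Finset.sum_const, Finset.card_erase_of_mem hr, hcard]; rfl
  · intro c hc
    by_cases hcr : c = r
    · subst hcr
      have : ((Polynomial.C (ι δ)⁻¹ * ∏ x ∈ C.erase c, (X - Polynomial.C (ι x)))).eval (ι c)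
          = (ι δ)⁻¹ * ι (∏ x ∈ C.erase c, (c - x)) := by
        rw [eval_mul, eval_C, eval_prod, map_prod]
        congr 1
        refine Finset.prod_congr rfl (fun x _ => ?_)
        rw [eval_sub, eval_X, eval_C, map_sub]
      rw [this, mem_range_iff hδ]
      exact hdvd
    · have hce : c ∈ C.erase r := Finset.mem_erase.mpr ⟨hcr, hc⟩
      have : ((Polynomial.C (ι δ)⁻¹ * ∏ x ∈ C.erase r, (X - Polynomial.C (ι x)))).eval (ι c) = 0 := by
        rw [eval_mul, eval_prod]
        have : ((X : FF[X]) - Polynomial.C (ι c)).eval (ι c) = 0 := by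
          rw [eval_sub, eval_X, eval_C, sub_self]
        rw [Finset.prod_eq_zero hce this, mul_zero]
      rw [this]
      exact ⟨0, (map_zero ι)⟩
  · intro hIV
    have := hIV z
    have heval : ((Polynomial.C (ι δ)⁻¹ * ∏ x ∈ C.erase r, (X - Polynomial.C (ι x)))).eval (ι z)
        = (ι δ)⁻¹ * ι (∏ x ∈ C.erase r, (z - x)) := by
      rw [eval_mul, eval_C, eval_prod, map_prod]
      congr 1
      refine Finset.prod_congr rfl (fun x _ => ?_)
      rw [eval_sub, eval_X, eval_C, map_sub]
    rw [heval, mem_range_iff hδ] at this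
    exact hndvd this

lemma diffnorms : ∀ t₁ ∈ ({0, 1, 2, ⟨1,1⟩, ⟨1,-1⟩} : Finset GaussianInt),
    ∀ t₂ ∈ ({0, 1, 2, ⟨1,1⟩, ⟨1,-1⟩} : Finset GaussianInt), t₁ ≠ t₂ →
    (t₁ - t₂).norm = 1 ∨ (t₁ - t₂).norm = 2 ∨ (t₁ - t₂).norm = 4 := by decide

lemma helperA (C : Finset GaussianInt) (hcard : C.card = 5) (r s ρ : GaussianInt)
    (hr : r ∈ C) (hs : s ∈ C) (hrs : r ≠ s) (hρ : Prime ρ) (ho : Odd ρ.norm)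
    (hd : ρ ∣ r - s) : GOOD C := by
  have hse : s ∈ C.erase r := Finset.mem_erase.mpr ⟨fun h => hrs h.symm, hs⟩
  have hdvd : ρ ∣ ∏ c ∈ C.erase r, (r - c) :=
    dvd_trans hd (Finset.dvd_prod_of_mem (fun c => r - c) hse)
  have hz : ∃ z : GaussianInt, ¬ ρ ∣ ∏ c ∈ C.erase r, (z - c) := by
    by_contra hcon
    push_neg at hcon
    classical
    set T : Finset GaussianInt := {0, 1, 2, ⟨1,1⟩, ⟨1,-1⟩} with hT
    have hTcard : T.card = 5 := by decide
    set F : GaussianInt → GaussianInt := fun t =>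
      if ht : ∃ c ∈ C.erase r, ρ ∣ (r + t - c) then ht.choose else 0 with hF
    have hmaps : ∀ t ∈ T, F t ∈ C.erase r := by
      intro t _
      have hex : ∃ c ∈ C.erase r, ρ ∣ (r + t - c) :=
        hρ.exists_mem_finset_dvd (hcon (r + t))
      simp only [hF, dif_pos hex]
      exact hex.choose_spec.1
    have hdF : ∀ t ∈ T, ρ ∣ (r + t - F t) := by
      intro t _
      have hex : ∃ c ∈ C.erase r, ρ ∣ (r + t - c) :=
        hρ.exists_mem_finset_dvd (hcon (r + t))
      simp only [hF, dif_pos hex]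
      exact hex.choose_spec.2
    have hclt : (C.erase r).card < T.card := by
      rw [hTcard, Finset.card_erase_of_mem hr, hcard]
      omega
    obtain ⟨t₁, ht₁, t₂, ht₂, hne, heq⟩ :=
      Finset.exists_ne_map_eq_of_card_lt_of_maps_to hclt hmaps
    have hdt : ρ ∣ (t₁ - t₂) := by
      have h1 := hdF t₁ ht₁
      have h2 := hdF t₂ ht₂
      rw [heq] at h1
      have := dvd_sub h1 h2
      have he : (r + t₁ - F t₂) - (r + t₂ - F t₂) = t₁ - t₂ := by ring
      rwa [he] at this
    have hnormdvd : ρ.norm ∣ (t₁ - t₂).norm := by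
      obtain ⟨c, hc⟩ := hdt; rw [hc, Zsqrtd.norm_mul]; exact Dvd.intro _ rfl
    have hmem := diffnorms t₁ ht₁ t₂ ht₂ hne
    have hnd : ρ.norm.natAbs ∣ (t₁ - t₂).norm.natAbs := Int.natAbs_dvd_natAbs.mpr hnormdvd
    have h4' : ρ.norm ∣ 4 := by
      rcases hmem with h | h | h <;> rw [h] at hnormdvd
      · exact dvd_trans hnormdvd (by norm_num)
      · exact dvd_trans hnormdvd (by norm_num)
      · exact hnormdvd
    have h4 : ρ.norm.natAbs ∣ 4 := by
      have := Int.natAbs_dvd_natAbs.mpr h4'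
      simpa using this
    have hodd : ρ.norm.natAbs % 2 = 1 := Nat.odd_iff.mp (Int.natAbs_odd.mpr ho)
    have hne1 : ρ.norm.natAbs ≠ 1 := fun h => hρ.not_unit (Zsqrtd.norm_eq_one_iff.mp h)
    have hle : ρ.norm.natAbs ≤ 4 := Nat.le_of_dvd (by norm_num) h4
    have hge : 2 ≤ ρ.norm.natAbs := by
      rcases Nat.eq_zero_or_pos ρ.norm.natAbs with h | h
      · rw [h] at h4; norm_num at h4
      · omega
    set n := ρ.norm.natAbs with hn
    interval_cases n <;> omega
  obtain ⟨z, hz⟩ := hz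
  exact ⟨r, hr, ρ, z, hρ.ne_zero, hdvd, hz⟩

lemma prod4 (f : GaussianInt → GaussianInt) {x y u t : GaussianInt}
    (h1 : x ≠ y) (h2 : x ≠ u) (h3 : x ≠ t) (h4 : y ≠ u) (h5 : y ≠ t) (h6 : u ≠ t) :
    ∏ c ∈ ({x,y,u,t} : Finset GaussianInt), f c = f x * (f y * (f u * f t)) := by
  rw [Finset.prod_insert (by simp [h1,h2,h3]), Finset.prod_insert (by simp [h4,h5]),
    Finset.prod_insert (by simp [h6]), Finset.prod_singleton]

lemma erase5 {w x y u t : GaussianInt} (h1 : w ≠ x) (h2 : w ≠ y) (h3 : w ≠ u) (h4 : w ≠ t) :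
    ({w,x,y,u,t} : Finset GaussianInt).erase w = {x,y,u,t} :=
  Finset.erase_insert (by simp [h1,h2,h3,h4])

lemma not_dvd_pow {m : GaussianInt} (h : ¬ pp ∣ m) (k : ℕ) : ¬ pp^(k+1) ∣ m * pp^k := by
  rintro ⟨c, hc⟩
  apply h
  refine ⟨c, mul_right_cancel₀ (pow_ne_zero k pp_ne_zero) ?_⟩
  rw [hc, pow_succ]; ring

lemma odd_mul3 {a b c : GaussianInt} (ha : ¬pp∣a) (hb : ¬pp∣b) (hc : ¬pp∣c) :
    ¬ pp ∣ a*(b*c) := by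
  intro h
  rcases pp_prime.2.2 _ _ h with h | h
  · exact ha h
  rcases pp_prime.2.2 _ _ h with h | h
  · exact hb h
  · exact hc h

lemma not_dvd_add {w v : GaussianInt} (hw : ¬ pp ∣ w) (hv : pp ∣ v) : ¬ pp ∣ (w + v) := by
  intro h
  exact hw (by have := dvd_sub h hv; simpa using this)

lemma not_dvd_unit_add {u v : GaussianInt} (hu : IsUnit u) (hv : pp ∣ v) : ¬ pp ∣ (u + v) :=
  not_dvd_add (fun h => pp_not_unit (isUnit_of_dvd_unit h hu)) hv

/-- exclude w; hypothesis: pp² divides the full difference product;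
    t is in the opposite parity class from x,y,u. -/
lemma helperPiSq {w x y u t : GaussianInt}
    (n1 : w ≠ x) (n2 : w ≠ y) (n3 : w ≠ u) (n4 : w ≠ t) (n5 : x ≠ y) (n6 : x ≠ u)
    (n7 : x ≠ t) (n8 : y ≠ u) (n9 : y ≠ t) (n10 : u ≠ t)
    (hD : pp^2 ∣ (w-x)*((w-y)*((w-u)*(w-t))))
    (hx : ¬ pp ∣ (t-x)) (hy : ¬ pp ∣ (t-y)) (hu : ¬ pp ∣ (t-u)) :
    GOOD {w,x,y,u,t} := by
  refine ⟨w, by simp, pp^2, t + pp, pow_ne_zero 2 pp_ne_zero, ?_, ?_⟩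
  · rw [erase5 n1 n2 n3 n4, prod4 _ n5 n6 n7 n8 n9 n10]
    exact hD
  · rw [erase5 n1 n2 n3 n4, prod4 _ n5 n6 n7 n8 n9 n10]
    have e1 : t + pp - x = (t - x) + pp := by ring
    have e2 : t + pp - y = (t - y) + pp := by ring
    have e3 : t + pp - u = (t - u) + pp := by ring
    have e4 : t + pp - t = pp := by ring
    rw [e1, e2, e3, e4]
    have hm : ¬ pp ∣ ((t-x)+pp) * (((t-y)+pp) * ((t-u)+pp)) :=
      odd_mul3 (not_dvd_add hx dvd_rfl) (not_dvd_add hy dvd_rfl) (not_dvd_add hu dvd_rfl)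
    intro hcon
    apply not_dvd_pow hm 1
    have epow : pp^(1+1) = pp^2 := by norm_num
    rw [epow, show ((t-x)+pp) * (((t-y)+pp) * ((t-u)+pp)) * pp ^ 1
        = ((t-x)+pp) * (((t-y)+pp) * (((t-u)+pp) * pp)) from by ring]
    exact hcon

/-- exclude p (class A = {p,q,r,s}), t in other class: δ = pp². -/
lemma helperB2 {p q r s t : GaussianInt}
    (n1 : p ≠ q) (n2 : p ≠ r) (n3 : p ≠ s) (n4 : p ≠ t) (n5 : q ≠ r) (n6 : q ≠ s)
    (n7 : q ≠ t) (n8 : r ≠ s) (n9 : r ≠ t) (n10 : s ≠ t)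
    (h1 : pp ∣ p - q) (h2 : pp ∣ p - r)
    (hx : ¬ pp ∣ (t-q)) (hy : ¬ pp ∣ (t-r)) (hu : ¬ pp ∣ (t-s)) :
    GOOD {p,q,r,s,t} := by
  refine helperPiSq n1 n2 n3 n4 n5 n6 n7 n8 n9 n10 ?_ hx hy hu
  have : pp^2 ∣ (p-q)*(p-r) := by rw [pow_two]; exact mul_dvd_mul h1 h2
  refine dvd_trans this ⟨(p-s)*(p-t), by ring⟩

/-- B1 : all five in the same class: exclude p, δ = pp, z = q+1. -/
lemma helperB1 {p q r s t : GaussianInt}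
    (n1 : p ≠ q) (n2 : p ≠ r) (n3 : p ≠ s) (n4 : p ≠ t) (n5 : q ≠ r) (n6 : q ≠ s)
    (n7 : q ≠ t) (n8 : r ≠ s) (n9 : r ≠ t) (n10 : s ≠ t)
    (h1 : pp ∣ p - q) (h2 : pp ∣ q - r) (h3 : pp ∣ q - s) (h4 : pp ∣ q - t) :
    GOOD {p,q,r,s,t} := by
  refine ⟨p, by simp, pp, q + 1, pp_ne_zero, ?_, ?_⟩
  · rw [erase5 n1 n2 n3 n4, prod4 _ n5 n6 n7 n8 n9 n10]
    exact dvd_mul_of_dvd_left h1 _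
  · rw [erase5 n1 n2 n3 n4, prod4 _ n5 n6 n7 n8 n9 n10]
    have e1 : q + 1 - q = (1 : GaussianInt) := by ring
    have e2 : q + 1 - r = 1 + (q - r) := by ring
    have e3 : q + 1 - s = 1 + (q - s) := by ring
    have e4 : q + 1 - t = 1 + (q - t) := by ring
    rw [e1, e2, e3, e4]
    have o1 : ¬ pp ∣ (1 + (q-r)) := not_dvd_unit_add isUnit_one h2
    have o2 : ¬ pp ∣ (1 + (q-s)) := not_dvd_unit_add isUnit_one h3
    have o3 : ¬ pp ∣ (1 + (q-t)) := not_dvd_unit_add isUnit_one h4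
    intro h
    rcases pp_prime.2.2 _ _ h with h | h
    · exact pp_not_unit (isUnit_of_dvd_one h)
    · exact odd_mul3 o1 o2 o3 h

/-- B3b : exclude a; pp³ ∣ a-b, pp ∣ a-c, d–e = unit·pp, cross differences odd. -/
lemma helperB3b {a b c d e u : GaussianInt}
    (n1 : a ≠ b) (n2 : a ≠ c) (n3 : a ≠ d) (n4 : a ≠ e) (n5 : b ≠ c) (n6 : b ≠ d)
    (n7 : b ≠ e) (n8 : c ≠ d) (n9 : c ≠ e) (n10 : d ≠ e)
    (h1 : pp^3 ∣ a - b) (h2 : pp ∣ a - c)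
    (hu : IsUnit u) (hde : d - e = u * pp)
    (hb : ¬ pp ∣ (d-b)) (hc : ¬ pp ∣ (d-c)) :
    GOOD {a,b,c,d,e} := by
  refine ⟨a, by simp, pp^4, d + pp^2, pow_ne_zero 4 pp_ne_zero, ?_, ?_⟩
  · rw [erase5 n1 n2 n3 n4, prod4 _ n5 n6 n7 n8 n9 n10]
    have : pp^4 ∣ (a-b)*(a-c) := by
      have : pp^4 = pp^3 * pp := by ring
      rw [this]; exact mul_dvd_mul h1 h2
    exact dvd_trans this ⟨(a-d)*(a-e), by ring⟩
  · rw [erase5 n1 n2 n3 n4, prod4 _ n5 n6 n7 n8 n9 n10]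
    have e1 : d + pp^2 - b = (d - b) + pp^2 := by ring
    have e2 : d + pp^2 - c = (d - c) + pp^2 := by ring
    have e3 : d + pp^2 - d = pp^2 := by ring
    have e4 : d + pp^2 - e = (u + pp) * pp := by
      rw [show d + pp^2 - e = (d - e) + pp^2 from by ring, hde]; ring
    rw [e1, e2, e3, e4]
    have hm : ¬ pp ∣ ((d-b)+pp^2) * (((d-c)+pp^2) * (u+pp)) :=
      odd_mul3 (not_dvd_add hb ⟨pp, by ring⟩) (not_dvd_add hc ⟨pp, by ring⟩)
        (not_dvd_unit_add hu dvd_rfl)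
    intro hcon
    apply not_dvd_pow hm 3
    have epow : pp^(3+1) = pp^4 := by norm_num
    rw [epow, show ((d-b)+pp^2) * (((d-c)+pp^2) * (u+pp)) * pp ^ 3
        = ((d-b)+pp^2) * (((d-c)+pp^2) * (pp^2 * ((u+pp)*pp))) from by ring]
    exact hcon

lemma i_unit : IsUnit (⟨0,1⟩ : GaussianInt) :=
  IsUnit.of_mul_eq_one (b := (⟨0,-1⟩ : GaussianInt)) (by decide)

lemma eq_pow {v u : GaussianInt} {k m : ℕ} (hu : IsUnit u) (hk : v = u * pp^k)
    (hd : pp^m ∣ v) (hnd : ¬ pp^(m+1) ∣ v) : v = u * pp^m := by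
  have hkm : k = m := by
    rcases lt_trichotomy k m with h | h | h
    · exfalso
      have h1 : pp^(k+1) ∣ v := dvd_trans (pow_dvd_pow pp h) hd
      obtain ⟨cc, hcc⟩ := h1
      have he : u = pp * cc := by
        apply mul_right_cancel₀ (pow_ne_zero k pp_ne_zero)
        rw [← hk, hcc]; ring
      exact pp_not_unit (isUnit_of_dvd_unit ⟨cc, he⟩ hu)
    · exact h
    · exact absurd (dvd_trans (pow_dvd_pow pp h) ⟨u, by rw [hk]; ring⟩) hnd
  rw [hkm] at hk; exact hk

lemma unit_of_not_dvd {v u : GaussianInt} {k : ℕ} (hu : IsUnit u) (hk : v = u*pp^k)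
    (h : ¬ pp ∣ v) : IsUnit v := by
  cases k with
  | zero => rw [hk, pow_zero, mul_one]; exact hu
  | succ n => exact absurd ⟨u*pp^n, by rw [hk]; ring⟩ h

lemma exact_one {v u : GaussianInt} {k : ℕ} (hu : IsUnit u) (hk : v = u*pp^k)
    (hd : pp ∣ v) (hnd : ¬ pp^2 ∣ v) : v = u * pp := by
  have h1 : pp^1 ∣ v := by rwa [pow_one]
  have h2 : ¬ pp^(1+1) ∣ v := by rwa [(by norm_num : (1:ℕ)+1 = 2)]
  have := eq_pow hu hk h1 h2
  rwa [pow_one] at this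

lemma exact_two {v u : GaussianInt} {k : ℕ} (hu : IsUnit u) (hk : v = u*pp^k)
    (hd : pp^2 ∣ v) (hnd : ¬ pp^3 ∣ v) : v = u * pp^2 := by
  have h2 : ¬ pp^(2+1) ∣ v := by rwa [(by norm_num : (2:ℕ)+1 = 3)]
  exact eq_pow hu hk hd h2

-- parity combinators
lemma Esymm {x y : GaussianInt} (h : pp ∣ x - y) : pp ∣ y - x := by
  have := dvd_neg.mpr h; rwa [neg_sub] at this
lemma NEsymm {x y : GaussianInt} (h : ¬ pp ∣ x - y) : ¬ pp ∣ y - x :=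
  fun h2 => h (Esymm h2)
lemma Etrans {x y z : GaussianInt} (h1 : pp ∣ x - y) (h2 : pp ∣ y - z) : pp ∣ x - z := by
  have := dvd_add h1 h2; rwa [sub_add_sub_cancel] at this
lemma Eoff {x y z : GaussianInt} (h1 : ¬ pp ∣ x - y) (h2 : pp ∣ y - z) : ¬ pp ∣ x - z :=
  fun h => h1 (Etrans h (Esymm h2))

/-- the 3–2 core: pair (x,y) in A-class with pp²∣x-y, third A-point c, B-class {s,t}. -/
lemma aux3 {x y c s t u0 : GaussianInt}
    (n1 : x ≠ y) (n2 : x ≠ c) (n3 : x ≠ s) (n4 : x ≠ t) (n5 : y ≠ c) (n6 : y ≠ s)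
    (n7 : y ≠ t) (n8 : c ≠ s) (n9 : c ≠ t) (n10 : s ≠ t)
    (fxy : ∃ u k, IsUnit u ∧ x - y = u * pp ^ k)
    (fxs : ∃ u k, IsUnit u ∧ x - s = u * pp ^ k)
    (fys : ∃ u k, IsUnit u ∧ y - s = u * pp ^ k)
    (fxt : ∃ u k, IsUnit u ∧ x - t = u * pp ^ k)
    (fyt : ∃ u k, IsUnit u ∧ y - t = u * pp ^ k)
    (hu0 : IsUnit u0) (hst : s - t = u0 * pp)
    (h2 : pp^2 ∣ x - y) (hxc : pp ∣ x - c) (crossx : ¬ pp ∣ x - s) :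
    GOOD {x,y,c,s,t} := by
  have hxy : pp ∣ x - y := dvd_trans ⟨pp, by ring⟩ h2
  have hstd : pp ∣ s - t := ⟨u0, by rw [hst]; ring⟩
  have hsy : ¬ pp ∣ s - y := Eoff (NEsymm crossx) hxy
  have hsc : ¬ pp ∣ s - c := Eoff (NEsymm crossx) hxc
  have hxt : ¬ pp ∣ x - t := fun h => crossx (Etrans h (Esymm hstd))
  have hys : ¬ pp ∣ y - s := NEsymm hsy
  have hyt : ¬ pp ∣ y - t := fun h => hys (Etrans h (Esymm hstd))
  by_cases h3 : pp^3 ∣ x - y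
  · exact helperB3b n1 n2 n3 n4 n5 n6 n7 n8 n9 n10 h3 hxc hu0 hst hsy hsc
  · obtain ⟨u1, k, hu1, hk⟩ := fxy
    have hxy2 : x - y = u1 * pp^2 := exact_two hu1 hk h2 h3
    set w : GaussianInt := u1 * ⟨0,1⟩ with hw
    have hwu : IsUnit w := hu1.mul i_unit
    have hxy2' : x - y = 2 * w := by rw [hxy2, pp_sq, hw]; ring
    obtain ⟨u2, k2, hu2, hk2⟩ := fxs
    have hxsu : IsUnit (x - s) := unit_of_not_dvd hu2 hk2 crossx
    obtain ⟨u3, k3, hu3, hk3⟩ := fys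
    have hysu : IsUnit (y - s) := unit_of_not_dvd hu3 hk3 hys
    obtain ⟨u4, k4, hu4, hk4⟩ := fxt
    have hxtu : IsUnit (x - t) := unit_of_not_dvd hu4 hk4 hxt
    obtain ⟨u5, k5, hu5, hk5⟩ := fyt
    have hytu : IsUnit (y - t) := unit_of_not_dvd hu5 hk5 hyt
    have e1 : (x - s) - 2 * w = y - s := by rw [← hxy2']; ring
    have e2 : (x - t) - 2 * w = y - t := by rw [← hxy2']; ring
    have q1 : x - s = w := unit_sub_two hxsu hwu (by rw [e1]; exact hysu)
    have q2 : x - t = w := unit_sub_two hxtu hwu (by rw [e2]; exact hytu)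
    exact absurd (sub_right_inj.mp (q1.trans q2.symm)) n10

/-- the full 3–2 case: A-class {p,q,r}, B-class {s,t}. -/
lemma lemmaB3 {p q r s t : GaussianInt}
    (n1 : p ≠ q) (n2 : p ≠ r) (n3 : p ≠ s) (n4 : p ≠ t) (n5 : q ≠ r) (n6 : q ≠ s)
    (n7 : q ≠ t) (n8 : r ≠ s) (n9 : r ≠ t) (n10 : s ≠ t)
    (fpq : ∃ u k, IsUnit u ∧ p - q = u * pp ^ k)
    (fpr : ∃ u k, IsUnit u ∧ p - r = u * pp ^ k)
    (fps : ∃ u k, IsUnit u ∧ p - s = u * pp ^ k)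
    (fpt : ∃ u k, IsUnit u ∧ p - t = u * pp ^ k)
    (fqr : ∃ u k, IsUnit u ∧ q - r = u * pp ^ k)
    (fqs : ∃ u k, IsUnit u ∧ q - s = u * pp ^ k)
    (fqt : ∃ u k, IsUnit u ∧ q - t = u * pp ^ k)
    (frs : ∃ u k, IsUnit u ∧ r - s = u * pp ^ k)
    (frt : ∃ u k, IsUnit u ∧ r - t = u * pp ^ k)
    (fst : ∃ u k, IsUnit u ∧ s - t = u * pp ^ k)
    (hpq : pp ∣ p - q) (hpr : pp ∣ p - r) (hst : pp ∣ s - t) (hps : ¬ pp ∣ p - s) :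
    GOOD {p,q,r,s,t} := by
  have hpt : ¬ pp ∣ p - t := fun h => hps (Etrans h (Esymm hst))
  have htp : ¬ pp ∣ t - p := NEsymm hpt
  have htq : ¬ pp ∣ t - q := Eoff htp hpq
  have htr : ¬ pp ∣ t - r := Eoff htp hpr
  have hqs : ¬ pp ∣ q - s := fun h => hps (Etrans hpq h)
  have hrs : ¬ pp ∣ r - s := fun h => hps (Etrans hpr h)
  have hqp : pp ∣ q - p := Esymm hpq
  by_cases h2st : pp^2 ∣ s - t
  · rw [show ({p,q,r,s,t} : Finset GaussianInt) = {s,p,q,r,t} from by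
      rw [Finset.insert_comm r s, Finset.insert_comm q s, Finset.insert_comm p s]]
    refine helperPiSq n3.symm n6.symm n8.symm n10 n1 n2 n4 n5 n7 n9 ?_ htp htq htr
    exact dvd_trans h2st ⟨(s-p)*((s-q)*(s-r)), by ring⟩
  · obtain ⟨u0, k0, hu0, hk0⟩ := fst
    have hst1 : s - t = u0 * pp := exact_one hu0 hk0 hst h2st
    by_cases hA1 : pp^2 ∣ p - q
    · exact aux3 n1 n2 n3 n4 n5 n6 n7 n8 n9 n10 fpq fps fqs fpt fqt hu0 hst1 hA1 hpr hps
    by_cases hA2 : pp^2 ∣ p - r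
    · rw [show ({p,q,r,s,t} : Finset GaussianInt) = {p,r,q,s,t} from by
        rw [Finset.insert_comm q r]]
      exact aux3 n2 n1 n3 n4 n5.symm n8 n9 n6 n7 n10 fpr fps frs fpt frt hu0 hst1 hA2 hpq hps
    by_cases hA3 : pp^2 ∣ q - r
    · rw [show ({p,q,r,s,t} : Finset GaussianInt) = {q,r,p,s,t} from by
        rw [Finset.insert_comm p q, Finset.insert_comm p r]]
      exact aux3 n5 n1.symm n6 n7 n2.symm n8 n9 n3 n4 n10 fqr fqs frs fqt frt hu0 hst1 hA3
        hqp hqs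
    · -- all three A-differences have valuation exactly 1 : impossible
      exfalso
      obtain ⟨u1, k1, hu1, hk1⟩ := fpq
      obtain ⟨u2, k2, hu2, hk2⟩ := fpr
      obtain ⟨u3, k3, hu3, hk3⟩ := fqr
      have e1 : p - q = u1 * pp := exact_one hu1 hk1 hpq hA1
      have e2 : p - r = u2 * pp := exact_one hu2 hk2 hpr hA2
      have e3 : q - r = u3 * pp := exact_one hu3 hk3 (Etrans hqp hpr) hA3
      have h5 : u3 * pp = u2 * pp - u1 * pp := by
        rw [← e1, ← e2, ← e3]; ring
      have hu : u3 = u2 - u1 := by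
        apply mul_right_cancel₀ pp_ne_zero
        rw [h5]; ring
      exact unit_sub_not_unit hu2 hu1 (hu ▸ hu3)

lemma fsym {v w : GaussianInt} (h : ∃ u k, IsUnit u ∧ v - w = u * pp ^ k) :
    ∃ u k, IsUnit u ∧ w - v = u * pp ^ k := by
  obtain ⟨u, k, hu, hk⟩ := h
  exact ⟨-u, k, hu.neg, by rw [show w - v = -(v-w) from by ring, hk]; ring⟩

open Finset in
lemma caseB {a b c d e : GaussianInt}
    (nab : a ≠ b) (nac : a ≠ c) (nad : a ≠ d) (nae : a ≠ e) (nbc : b ≠ c) (nbd : b ≠ d)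
    (nbe : b ≠ e) (ncd : c ≠ d) (nce : c ≠ e) (nde : d ≠ e)
    (fab : ∃ u k, IsUnit u ∧ a - b = u * pp ^ k)
    (fac : ∃ u k, IsUnit u ∧ a - c = u * pp ^ k)
    (fad : ∃ u k, IsUnit u ∧ a - d = u * pp ^ k)
    (fae : ∃ u k, IsUnit u ∧ a - e = u * pp ^ k)
    (fbc : ∃ u k, IsUnit u ∧ b - c = u * pp ^ k)
    (fbd : ∃ u k, IsUnit u ∧ b - d = u * pp ^ k)
    (fbe : ∃ u k, IsUnit u ∧ b - e = u * pp ^ k)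
    (fcd : ∃ u k, IsUnit u ∧ c - d = u * pp ^ k)
    (fce : ∃ u k, IsUnit u ∧ c - e = u * pp ^ k)
    (fde : ∃ u k, IsUnit u ∧ d - e = u * pp ^ k) :
    GOOD {a,b,c,d,e} := by
  have nba := nab.symm; have nca := nac.symm; have nda := nad.symm; have nea := nae.symm
  have ncb := nbc.symm; have ndb := nbd.symm; have neb := nbe.symm; have ndc := ncd.symm
  have nec := nce.symm; have ned := nde.symm
  have fba := fsym fab; have fca := fsym fac; have fda := fsym fad; have fea := fsym fae
  have fcb := fsym fbc; have fdb := fsym fbd; have feb := fsym fbe; have fdc := fsym fcd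
  have fec := fsym fce; have fed := fsym fde
  by_cases hab : pp ∣ a - b <;> by_cases hac : pp ∣ a - c <;>
    by_cases had : pp ∣ a - d <;> by_cases hae : pp ∣ a - e
  -- 1 : b+ c+ d+ e+
  · exact helperB1 nab nac nad nae nbc nbd nbe ncd nce nde hab
      (Etrans (Esymm hab) hac) (Etrans (Esymm hab) had) (Etrans (Esymm hab) hae)
  -- 2 : b+ c+ d+ e-
  · exact helperB2 nab nac nad nae nbc nbd nbe ncd nce nde hab hac
      (Eoff (NEsymm hae) hab) (Eoff (NEsymm hae) hac) (Eoff (NEsymm hae) had)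
  -- 3 : b+ c+ d- e+
  · rw [show ({a,b,c,d,e} : Finset GaussianInt) = {a,b,c,e,d} from by
      rw [Finset.pair_comm d e]]
    exact helperB2 nab nac nae nad nbc nbe nbd nce ncd ned hab hac
      (Eoff (NEsymm had) hab) (Eoff (NEsymm had) hac) (Eoff (NEsymm had) hae)
  -- 4 : b+ c+ d- e-  : A = {a,b,c}, B = {d,e}
  · exact lemmaB3 nab nac nad nae nbc nbd nbe ncd nce nde
      fab fac fad fae fbc fbd fbe fcd fce fde hab hac (Etotal had hae) had
  -- 5 : b+ c- d+ e+
  · rw [show ({a,b,c,d,e} : Finset GaussianInt) = {a,b,d,e,c} from by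
      rw [Finset.insert_comm c d, Finset.pair_comm c e]]
    exact helperB2 nab nad nae nac nbd nbe nbc nde ndc nec hab had
      (Eoff (NEsymm hac) hab) (Eoff (NEsymm hac) had) (Eoff (NEsymm hac) hae)
  -- 6 : b+ c- d+ e-  : A = {a,b,d}, B = {c,e}
  · rw [show ({a,b,c,d,e} : Finset GaussianInt) = {a,b,d,c,e} from by
      rw [Finset.insert_comm c d]]
    exact lemmaB3 nab nad nac nae nbd nbc nbe ndc nde nce
      fab fad fac fae fbd fbc fbe fdc fde fce hab had (Etotal hac hae) hac
  -- 7 : b+ c- d- e+  : A = {a,b,e}, B = {c,d}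
  · rw [show ({a,b,c,d,e} : Finset GaussianInt) = {a,b,e,c,d} from by
      rw [Finset.pair_comm d e, Finset.insert_comm c e]]
    exact lemmaB3 nab nae nac nad nbe nbc nbd nec ned ncd
      fab fae fac fad fbe fbc fbd fec fed fcd hab hae (Etotal hac had) hac
  -- 8 : b+ c- d- e-  : A = {c,d,e}, B = {a,b}
  · rw [show ({a,b,c,d,e} : Finset GaussianInt) = {c,d,e,a,b} from by
      rw [Finset.insert_comm b c, Finset.insert_comm b d, Finset.pair_comm b e, Finset.insert_comm a c,
        Finset.insert_comm a d, Finset.insert_comm a e]]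
    exact lemmaB3 ncd nce nca ncb nde nda ndb nea neb nab
      fcd fce fca fcb fde fda fdb fea feb fab (Etotal hac had) (Etotal hac hae) hab
      (NEsymm hac)
  -- 9 : b- c+ d+ e+
  · rw [show ({a,b,c,d,e} : Finset GaussianInt) = {a,c,d,e,b} from by
      rw [Finset.insert_comm b c, Finset.insert_comm b d, Finset.pair_comm b e]]
    exact helperB2 nac nad nae nab ncd nce ncb nde ndb neb hac had
      (Eoff (NEsymm hab) hac) (Eoff (NEsymm hab) had) (Eoff (NEsymm hab) hae)
  -- 10 : b- c+ d+ e- : A = {a,c,d}, B = {b,e}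
  · rw [show ({a,b,c,d,e} : Finset GaussianInt) = {a,c,d,b,e} from by
      rw [Finset.insert_comm b c, Finset.insert_comm b d]]
    exact lemmaB3 nac nad nab nae ncd ncb nce ndb nde nbe
      fac fad fab fae fcd fcb fce fdb fde fbe hac had (Etotal hab hae) hab
  -- 11 : b- c+ d- e+ : A = {a,c,e}, B = {b,d}
  · rw [show ({a,b,c,d,e} : Finset GaussianInt) = {a,c,e,b,d} from by
      rw [Finset.insert_comm b c, Finset.insert_comm b d, Finset.pair_comm b e, Finset.insert_comm d e, Finset.pair_comm d b]]
    exact lemmaB3 nac nae nab nad nce ncb ncd neb ned nbd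
      fac fae fab fad fce fcb fcd feb fed fbd hac hae (Etotal hab had) hab
  -- 12 : b- c+ d- e- : A = {b,d,e}, B = {a,c}
  · rw [show ({a,b,c,d,e} : Finset GaussianInt) = {b,d,e,a,c} from by
      rw [Finset.insert_comm a b, Finset.insert_comm a c, Finset.insert_comm a d, Finset.pair_comm a e,
        Finset.insert_comm c d, Finset.insert_comm c e, Finset.pair_comm c a]]
    exact lemmaB3 nbd nbe nba nbc nde nda ndc nea nec nac
      fbd fbe fba fbc fde fda fdc fea fec fac (Etotal hab had) (Etotal hab hae) hac
      (NEsymm hab)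
  -- 13 : b- c- d+ e+ : A = {a,d,e}, B = {b,c}
  · rw [show ({a,b,c,d,e} : Finset GaussianInt) = {a,d,e,b,c} from by
      rw [Finset.insert_comm b c, Finset.insert_comm b d, Finset.pair_comm b e, Finset.insert_comm c d,
        Finset.insert_comm c e, Finset.pair_comm c b]]
    exact lemmaB3 nad nae nab nac nde ndb ndc neb nec nbc
      fad fae fab fac fde fdb fdc feb fec fbc had hae (Etotal hab hac) hab
  -- 14 : b- c- d+ e- : A = {b,c,e}, B = {a,d}
  · rw [show ({a,b,c,d,e} : Finset GaussianInt) = {b,c,e,a,d} from by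
      rw [Finset.insert_comm a b, Finset.insert_comm a c, Finset.insert_comm a d, Finset.pair_comm a e,
        Finset.insert_comm d e, Finset.pair_comm d a]]
    exact lemmaB3 nbc nbe nba nbd nce nca ncd nea ned nad
      fbc fbe fba fbd fce fca fcd fea fed fad (Etotal hab hac) (Etotal hab hae) had
      (NEsymm hab)
  -- 15 : b- c- d- e+ : A = {b,c,d}, B = {a,e}
  · rw [show ({a,b,c,d,e} : Finset GaussianInt) = {b,c,d,a,e} from by
      rw [Finset.insert_comm a b, Finset.insert_comm a c, Finset.insert_comm a d]]
    exact lemmaB3 nbc nbd nba nbe ncd nca nce nda nde nae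
      fbc fbd fba fbe fcd fca fce fda fde fae (Etotal hab hac) (Etotal hab had) hae
      (NEsymm hab)
  -- 16 : b- c- d- e- : all of b,c,d,e in other class
  · rw [show ({a,b,c,d,e} : Finset GaussianInt) = {b,c,d,e,a} from by
      rw [Finset.insert_comm a b, Finset.insert_comm a c, Finset.insert_comm a d, Finset.pair_comm a e]]
    exact helperB2 nbc nbd nbe nba ncd nce nca nde nda nea
      (Etotal hab hac) (Etotal hab had) hac had hae

lemma core (C : Finset GaussianInt) (hcard : C.card = 5) : GOOD C := by
  obtain ⟨a, S1, ha, rfl, h1⟩ := Finset.card_eq_succ.mp (by omega : C.card = 4 + 1)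
  obtain ⟨b, S2, hb, rfl, h2⟩ := Finset.card_eq_succ.mp (by omega : S1.card = 3 + 1)
  obtain ⟨c, S3, hc, rfl, h3⟩ := Finset.card_eq_succ.mp (by omega : S2.card = 2 + 1)
  obtain ⟨d, S4, hd, rfl, h4⟩ := Finset.card_eq_succ.mp (by omega : S3.card = 1 + 1)
  obtain ⟨e, rfl⟩ := Finset.card_eq_one.mp h4
  simp only [Finset.mem_insert, Finset.mem_singleton, not_or] at ha hb hc hd
  obtain ⟨nab, nac, nad, nae⟩ := ha
  obtain ⟨nbc, nbd, nbe⟩ := hb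
  obtain ⟨ncd, nce⟩ := hc
  have nde : d ≠ e := hd
  have ma : a ∈ (insert a (insert b (insert c (insert d ({e} : Finset GaussianInt))))) := by simp
  have mb : b ∈ (insert a (insert b (insert c (insert d ({e} : Finset GaussianInt))))) := by simp
  have mc : c ∈ (insert a (insert b (insert c (insert d ({e} : Finset GaussianInt))))) := by simp
  have md : d ∈ (insert a (insert b (insert c (insert d ({e} : Finset GaussianInt))))) := by simp
  have me : e ∈ (insert a (insert b (insert c (insert d ({e} : Finset GaussianInt))))) := by simp
  by_cases hodd : ∃ x ∈ (insert a (insert b (insert c (insert d ({e} : Finset GaussianInt))))),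
      ∃ y ∈ (insert a (insert b (insert c (insert d ({e} : Finset GaussianInt))))),
      x ≠ y ∧ ∃ ρ, Prime ρ ∧ Odd ρ.norm ∧ ρ ∣ (x - y)
  · obtain ⟨x, hx, y, hy, hne, ρ, p1, p2, p3⟩ := hodd
    exact helperA _ hcard x y ρ hx hy hne p1 p2 p3
  · have F : ∀ x y : GaussianInt,
        x ∈ (insert a (insert b (insert c (insert d ({e} : Finset GaussianInt))))) →
        y ∈ (insert a (insert b (insert c (insert d ({e} : Finset GaussianInt))))) →
        x ≠ y → ∃ u k, IsUnit u ∧ x - y = u * pp ^ k := by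
      intro x y hx hy hne
      rcases formOrOdd (x - y) (sub_ne_zero.mpr hne) with ⟨ρ, p1, p2, p3⟩ | h
      · exact absurd ⟨x, hx, y, hy, hne, ρ, p1, p2, p3⟩ hodd
      · exact h
    exact caseB nab nac nad nae nbc nbd nbe ncd nce nde
      (F a b ma mb nab) (F a c ma mc nac) (F a d ma md nad) (F a e ma me nae)
      (F b c mb mc nbc) (F b d mb md nbd) (F b e mb me nbe)
      (F c d mc md ncd) (F c e mc me nce) (F d e md me nde)


end NF5

/-- There is no `4`-universal set of cardinality `5` in `ℤ[i]`. -/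
theorem no_five_point_four_universal (C : Finset GaussianInt) (hcard : C.card = 5) :
    ∃ f : FF[X], f.natDegree ≤ 4 ∧ (∀ c ∈ C, f.eval (ι c) ∈ Set.range ι) ∧
      ¬ IntegerValued f :=
  NF5.good_imp C hcard (NF5.core C hcard)
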